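/- Let O be a discrete valuation ring with uniformizer π, fraction field K and residue field k. Let M₁, M₂ be lattices in a finite-dimensional K-vector space V and M₁', M₂' lattices in a finite-dimensional K-vector space V'. Regard M₁ ⊗_O M₁' as a lattice in V ⊗_K V'. Then, under the canonical isomorphism (M₁ ⊗_O M₁')/π(M₁ ⊗_O M₁') ≅ (M₁/πM₁) ⊗_k (M₁'/πM₁'), one has for every i ∈ ℤ: F^i(M₁ ⊗ M₁', M₂ ⊗ M₂') = Σ_{i₁+i₂=i} F^{i₁}(M₁,M₂) ⊗ F^{i₂}(M₁',M₂'). -/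

import Mathlib

open Finset TensorProduct Pointwise

/-- `M` is an `O`-lattice in the `K`-vector space `V`. -/
def IsLatticeIn (O K : Type*) {V : Type*} [CommRing O] [Field K] [Algebra O K]
    [AddCommGroup V] [Module K V] [Module O V] [IsScalarTower O K V]
    (M : Submodule O V) : Prop :=
  M.FG ∧ Submodule.span K (M : Set V) = ⊤

/-- The tensor product lattice `M ⊗_O M'` inside `V ⊗_K V'`, i.e. the `O`-span of
the pure tensors `m ⊗ m'` with `m ∈ M`, `m' ∈ M'`. -/
def tensorLattice {O K V V' : Type*} [CommRing O] [Field K] [Algebra O K]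
    [AddCommGroup V] [Module K V] [Module O V] [IsScalarTower O K V]
    [AddCommGroup V'] [Module K V'] [Module O V'] [IsScalarTower O K V']
    (M : Submodule O V) (M' : Submodule O V') : Submodule O (V ⊗[K] V') :=
  Submodule.span O (Set.image2 (fun x y => x ⊗ₜ[K] y) (M : Set V) (M' : Set V'))

section AuxLemmas

open Set Submodule

set_option linter.unusedSectionVars false

variable {O K : Type*} [CommRing O] [IsDomain O] [Field K] [Algebra O K] [IsFractionRing O K]
  {π : O}

section OneModule

variable {W : Type*} [AddCommGroup W] [Module K W] [Module O W] [IsScalarTower O K W]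
  {ι : Type*}

lemma vp_ne (hπ : π ≠ 0) : (algebraMap O K) π ≠ 0 := fun h =>
  hπ (IsFractionRing.injective O K (by simpa using h))

lemma scaled_span_mono (hπ : π ≠ 0) (w : ι → W) {c c' : ι → ℤ} (h : ∀ a, c' a ≤ c a) :
    span O (range fun a => (algebraMap O K π) ^ (c a) • w a)
      ≤ span O (range fun a => (algebraMap O K π) ^ (c' a) • w a) := by
  rw [span_le]
  rintro _ ⟨a, rfl⟩
  have key : (algebraMap O K π) ^ (c a) • w a
      = (π ^ (c a - c' a).toNat) • ((algebraMap O K π) ^ (c' a) • w a) := by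
    rw [← algebraMap_smul K (π ^ (c a - c' a).toNat), map_pow, smul_smul,
      ← zpow_natCast ((algebraMap O K) π), ← zpow_add₀ (vp_ne hπ),
      Int.toNat_of_nonneg (by have := h a; omega), sub_add_cancel]
  show (algebraMap O K π) ^ (c a) • w a ∈ _
  rw [key]
  exact Submodule.smul_mem _ _ (subset_span ⟨a, rfl⟩)

lemma scaled_span_smul (hπ : π ≠ 0) (w : ι → W) (c : ι → ℤ) (t : ℤ) :
    (algebraMap O K π) ^ t • span O (range fun a => (algebraMap O K π) ^ (c a) • w a)
      = span O (range fun a => (algebraMap O K π) ^ (t + c a) • w a) := by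
  rw [Submodule.smul_span, Set.smul_set_range]
  have : (fun i => (algebraMap O K π) ^ t • (algebraMap O K π) ^ (c i) • w i)
      = fun i => (algebraMap O K π) ^ (t + c i) • w i :=
    funext fun a => by rw [smul_smul, ← zpow_add₀ (vp_ne hπ)]
  rw [this]

lemma scaled_span_sup (hπ : π ≠ 0) (w : ι → W) (c c' : ι → ℤ) :
    span O (range fun a => (algebraMap O K π) ^ (c a) • w a)
      ⊔ span O (range fun a => (algebraMap O K π) ^ (c' a) • w a)
      = span O (range fun a => (algebraMap O K π) ^ (min (c a) (c' a)) • w a) := by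
  apply le_antisymm
  · exact sup_le (scaled_span_mono hπ w fun a => min_le_left _ _)
      (scaled_span_mono hπ w fun a => min_le_right _ _)
  · rw [span_le]
    rintro _ ⟨a, rfl⟩
    show (algebraMap O K π) ^ (min (c a) (c' a)) • w a ∈ _
    rcases le_total (c a) (c' a) with hle | hle
    · rw [min_eq_left hle]
      exact le_sup_left (α := Submodule O W) (subset_span ⟨a, rfl⟩)
    · rw [min_eq_right hle]
      exact le_sup_right (α := Submodule O W) (subset_span ⟨a, rfl⟩)

lemma scaled_span_iSup (hπ : π ≠ 0) (w : ι → W) (f : ℤ → ι → ℤ) (g : ι → ℤ)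
    (h1 : ∀ j a, g a ≤ f j a) (h2 : ∀ a, ∃ j, f j a = g a) :
    (⨆ j : ℤ, span O (range fun a => (algebraMap O K π) ^ (f j a) • w a))
      = span O (range fun a => (algebraMap O K π) ^ (g a) • w a) := by
  apply le_antisymm
  · exact iSup_le fun j => scaled_span_mono hπ w (h1 j)
  · rw [span_le]
    rintro _ ⟨a, rfl⟩
    obtain ⟨j, hj⟩ := h2 a
    show (algebraMap O K π) ^ (g a) • w a ∈ _
    rw [← hj]
    exact le_iSup (fun j => span O (range fun a => (algebraMap O K π) ^ (f j a) • w a)) j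
      (subset_span ⟨a, rfl⟩)

lemma mem_scaled_span (hπ : π ≠ 0) (e : Module.Basis ι K W) (c : ι → ℤ) (x : W) :
    x ∈ span O (range fun a => (algebraMap O K π) ^ (c a) • e a)
      ↔ ∀ a, (algebraMap O K π) ^ (-(c a)) * e.repr x a ∈ Set.range (algebraMap O K) := by
  set u : ι → Kˣ := fun a => (Units.mk0 ((algebraMap O K π) ^ (c a)) (zpow_ne_zero _ (vp_ne hπ)))
  have hb : ⇑(e.unitsSMul u) = fun a => (algebraMap O K π) ^ (c a) • e a :=
    funext fun a => by rw [Module.Basis.unitsSMul_apply]; rfl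
  rw [← hb, Module.Basis.mem_span_iff_repr_mem]
  apply forall_congr'
  intro a
  rw [Module.Basis.repr_unitsSMul]
  have : (u a)⁻¹ • e.repr x a = (algebraMap O K π) ^ (-(c a)) * e.repr x a := by
    rw [Units.smul_def, Units.val_inv_eq_inv_val, Units.val_mk0, ← zpow_neg, smul_eq_mul]
  rw [this]

lemma zpow_mul_mem_range (hπ : π ≠ 0) {s t : ℤ} (h : s ≤ t) {k : K}
    (hk : (algebraMap O K π) ^ (-t) * k ∈ Set.range (algebraMap O K)) :
    (algebraMap O K π) ^ (-s) * k ∈ Set.range (algebraMap O K) := by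
  obtain ⟨o, ho⟩ := hk
  refine ⟨π ^ (t - s).toNat * o, ?_⟩
  rw [map_mul, map_pow, ← zpow_natCast, Int.toNat_of_nonneg (by omega), ho, ← mul_assoc,
    ← zpow_add₀ (vp_ne hπ), show t - s + -t = -s by omega]

lemma scaled_span_inf (hπ : π ≠ 0) (e : Module.Basis ι K W) (c c' : ι → ℤ) :
    span O (range fun a => (algebraMap O K π) ^ (c a) • e a)
      ⊓ span O (range fun a => (algebraMap O K π) ^ (c' a) • e a)
      = span O (range fun a => (algebraMap O K π) ^ (max (c a) (c' a)) • e a) := by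
  ext x
  simp only [Submodule.mem_inf, mem_scaled_span hπ]
  constructor
  · rintro ⟨h1, h2⟩ a
    rcases max_cases (c a) (c' a) with ⟨hm, _⟩ | ⟨hm, _⟩
    · rw [hm]; exact h1 a
    · rw [hm]; exact h2 a
  · intro h
    exact ⟨fun a => zpow_mul_mem_range hπ (le_max_left _ _) (h a),
      fun a => zpow_mul_mem_range hπ (le_max_right _ _) (h a)⟩

end OneModule

section TwoModules

variable {V V' : Type*}
  [AddCommGroup V] [Module K V] [Module O V] [IsScalarTower O K V]
  [AddCommGroup V'] [Module K V'] [Module O V'] [IsScalarTower O K V']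

/-- The canonical `O`-bilinear map `V → V' → V ⊗[K] V'`. -/
noncomputable def tmulO (O K : Type*) {V V' : Type*} [CommRing O] [Field K] [Algebra O K]
    [AddCommGroup V] [Module K V] [Module O V] [IsScalarTower O K V]
    [AddCommGroup V'] [Module K V'] [Module O V'] [IsScalarTower O K V'] :
    V →ₗ[O] V' →ₗ[O] (V ⊗[K] V') :=
  (TensorProduct.mk K V V').restrictScalars₁₂ O O

lemma scaled_span_tensor (hπ : π ≠ 0) {ι ι' : Type*} (w : ι → V) (w' : ι' → V')
    (c : ι → ℤ) (c' : ι' → ℤ) :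
    span O (Set.image2 (fun x y => x ⊗ₜ[K] y)
        (span O (range fun a => (algebraMap O K π) ^ (c a) • w a) : Set V)
        (span O (range fun b => (algebraMap O K π) ^ (c' b) • w' b) : Set V'))
      = span O (range fun p : ι × ι' =>
          (algebraMap O K π) ^ (c p.1 + c' p.2) • (w p.1 ⊗ₜ[K] w' p.2)) := by
  have hfun : (fun (x : V) (y : V') => x ⊗ₜ[K] y) = fun m n => tmulO O K m n := rfl
  rw [hfun, ← Submodule.map₂_eq_span_image2, Submodule.map₂_span_span, Set.image2_range]
  have : (fun x : ι × ι' => tmulO O K ((algebraMap O K π) ^ (c x.1) • w x.1)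
        ((algebraMap O K π) ^ (c' x.2) • w' x.2))
      = fun p : ι × ι' => (algebraMap O K π) ^ (c p.1 + c' p.2) • (w p.1 ⊗ₜ[K] w' p.2) :=
    funext fun p => by
      show ((algebraMap O K π) ^ (c p.1) • w p.1) ⊗ₜ[K] ((algebraMap O K π) ^ (c' p.2) • w' p.2) = _
      rw [smul_tmul', tmul_smul, smul_tmul', smul_smul, ← zpow_add₀ (vp_ne hπ), add_comm (c' p.2)]
  rw [this]

end TwoModules

section AdaptedBasis

variable {V : Type*} [AddCommGroup V] [Module K V] [Module O V] [IsScalarTower O K V]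

lemma exists_denom_mem (M : Submodule O V) {x : V} (hx : x ∈ span K (M : Set V)) :
    ∃ r : O, r ≠ 0 ∧ r • x ∈ M := by
  induction hx using Submodule.span_induction with
  | mem x h => exact ⟨1, one_ne_zero, by simpa using h⟩
  | zero => exact ⟨1, one_ne_zero, by simp⟩
  | add x y _ _ hx hy =>
    obtain ⟨r, hr, hrx⟩ := hx
    obtain ⟨s, hs, hsy⟩ := hy
    exact ⟨r * s, mul_ne_zero hr hs, by
      rw [smul_add]
      exact add_mem (by rw [mul_comm, mul_smul]; exact M.smul_mem s hrx)
        (by rw [mul_smul]; exact M.smul_mem r hsy)⟩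
  | smul k x _ hx =>
    obtain ⟨r, hr, hrx⟩ := hx
    obtain ⟨p, q, hq, hk⟩ := IsFractionRing.div_surjective (A := O) k
    refine ⟨q * r, mul_ne_zero (nonZeroDivisors.ne_zero hq) hr, ?_⟩
    have hq0 : algebraMap O K q ≠ 0 := fun h =>
      nonZeroDivisors.ne_zero hq (IsFractionRing.injective O K (by simpa using h))
    have : (q * r) • (k • x) = p • (r • x) := by
      rw [← algebraMap_smul K (q * r), ← algebraMap_smul K p (r • x), smul_smul,
        ← algebraMap_smul K r x, smul_smul]
      congr 1
      rw [map_mul, ← hk]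
      field_simp
    rw [this]
    exact M.smul_mem p hrx

lemma exists_denom_le (M₁ M₂ : Submodule O V) (hfg : M₂.FG) (h1 : span K (M₁ : Set V) = ⊤) :
    ∃ r : O, r ≠ 0 ∧ (algebraMap O K r) • M₂ ≤ M₁ := by
  obtain ⟨s, hs⟩ := hfg
  classical
  have key : ∀ t : Finset V, ∃ r : O, r ≠ 0 ∧ ∀ x ∈ t, r • x ∈ M₁ := by
    intro t
    induction t using Finset.induction with
    | empty => exact ⟨1, one_ne_zero, by simp⟩
    | @insert y t' hyt ih =>
      obtain ⟨r, hr, hrt⟩ := ih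
      obtain ⟨ry, hry, hryy⟩ := exists_denom_mem M₁
        (show y ∈ span K (M₁ : Set V) by rw [h1]; trivial)
      refine ⟨ry * r, mul_ne_zero hry hr, ?_⟩
      intro z hz
      rcases Finset.mem_insert.mp hz with rfl | hz
      · rw [mul_comm, mul_smul]; exact M₁.smul_mem r hryy
      · rw [mul_smul]; exact M₁.smul_mem ry (hrt z hz)
  obtain ⟨r, hr, hrs⟩ := key s
  refine ⟨r, hr, ?_⟩
  have : (algebraMap O K r) • M₂ = span O ((algebraMap O K r) • (s : Set V)) := by
    rw [← hs, Submodule.smul_span]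
  rw [this, span_le]
  rintro _ ⟨x, hx, rfl⟩
  simpa [algebraMap_smul] using hrs x hx

lemma units_span_eq {ι W : Type*} [AddCommGroup W] [Module O W] (u : ι → Oˣ) (w : ι → W) :
    span O (range fun i => (u i : O) • w i) = span O (range w) := by
  apply le_antisymm
  · rw [span_le]; rintro _ ⟨i, rfl⟩
    exact Submodule.smul_mem _ _ (subset_span ⟨i, rfl⟩)
  · rw [span_le]; rintro _ ⟨i, rfl⟩
    have : w i = ((u i)⁻¹ : Oˣ) • ((u i : O) • w i) := by
      rw [Units.smul_def, smul_smul]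
      norm_cast
      rw [inv_mul_cancel, Units.val_one, one_smul]
    rw [this]
    exact Submodule.smul_mem _ _ (subset_span ⟨i, rfl⟩)

lemma exists_adapted_basis [IsDiscreteValuationRing O] [FiniteDimensional K V]
    {π : O} (hπ : Irreducible π)
    (M₁ M₂ : Submodule O V) (h₁ : M₁.FG) (h₁s : span K (M₁ : Set V) = ⊤)
    (h₂ : M₂.FG) (h₂s : span K (M₂ : Set V) = ⊤) :
    ∃ (n : ℕ) (e : Module.Basis (Fin n) K V) (d : Fin n → ℤ),
      M₁ = span O (range ⇑e)
        ∧ M₂ = span O (range fun a => (algebraMap O K π) ^ (d a) • e a) := by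
  obtain ⟨r, hr, hrle⟩ := exists_denom_le M₁ M₂ h₂ h₁s
  have hAr : (algebraMap O K) r ≠ 0 := fun h =>
    hr (IsFractionRing.injective O K (by simpa using h))
  set N : Submodule O V := (algebraMap O K r) • M₂ with hN
  haveI : Module.Finite O ↥M₁ := Module.Finite.iff_fg.mpr h₁
  haveI : NoZeroSMulDivisors O ↥M₁ := by
    refine ⟨fun {c x} h => ?_⟩
    have hv : (algebraMap O K c) • (x : V) = 0 := by
      rw [algebraMap_smul]
      exact_mod_cast congrArg (Subtype.val) h
    rcases smul_eq_zero.mp hv with hc | hx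
    · exact Or.inl (by
        by_contra hc0
        exact (fun h' => hc0 (IsFractionRing.injective O K (by simpa using h'))) hc)
    · exact Or.inr (Subtype.ext hx)
  haveI : Module.Free O ↥M₁ := Module.free_of_finite_type_torsion_free'
  obtain ⟨n, o, hno, bO, bN, a, hsnf⟩ :=
    Submodule.exists_smith_normal_form_of_le (Module.Free.chooseBasis O ↥M₁)
      (N.comap M₁.subtype) ⊤ le_top
  set φ : ↥(⊤ : Submodule O ↥M₁) →ₗ[O] V := M₁.subtype.comp (⊤ : Submodule O ↥M₁).subtype with hφ
  have hφinj : Function.Injective φ := Subtype.val_injective.comp Subtype.val_injective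
  set e₀ : Fin o → V := fun i => φ (bO i) with he₀
  have hspan₁ : span O (range e₀) = M₁ := by
    show span O (range (⇑φ ∘ ⇑bO)) = M₁
    rw [Set.range_comp, ← Submodule.map_span, bO.span_eq, Submodule.map_top, hφ,
      LinearMap.range_comp, Submodule.range_subtype, Submodule.map_subtype_top]
  have hindO : LinearIndependent O e₀ :=
    bO.linearIndependent.map' φ (LinearMap.ker_eq_bot_of_injective hφinj)
  have hindK : LinearIndependent K e₀ := (LinearIndependent.iff_fractionRing O K).mp hindO
  have hsp : ⊤ ≤ span K (range e₀) := by
    rw [← h₁s, span_le]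
    intro x hx
    have : x ∈ span O (range e₀) := hspan₁ ▸ hx
    exact Submodule.span_subset_span O K _ this
  set e : Module.Basis (Fin o) K V := Module.Basis.mk hindK hsp with he
  set ψ : ↥(N.comap M₁.subtype) →ₗ[O] V := M₁.subtype.comp (N.comap M₁.subtype).subtype with hψ
  have hψinj : Function.Injective ψ := Subtype.val_injective.comp Subtype.val_injective
  set f₀ : Fin n → V := fun i => ψ (bN i) with hf₀
  have hNle : N ≤ M₁ := hrle
  have hspanN : span O (range f₀) = N := by
    show span O (range (⇑ψ ∘ ⇑bN)) = N
    rw [Set.range_comp, ← Submodule.map_span, bN.span_eq, Submodule.map_top, hψ,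
      LinearMap.range_comp, Submodule.range_subtype, Submodule.map_comap_subtype,
      inf_eq_right.mpr hNle]
  have hNs : span K (N : Set V) = ⊤ := by
    rw [hN, Submodule.coe_pointwise_smul, ← Submodule.smul_span, h₂s]
    rw [eq_top_iff]
    intro x _
    have := Submodule.smul_mem_pointwise_smul ((algebraMap O K r)⁻¹ • x) (algebraMap O K r)
      (⊤ : Submodule K V) trivial
    rwa [smul_inv_smul₀ hAr] at this
  have hindON : LinearIndependent O f₀ :=
    bN.linearIndependent.map' ψ (LinearMap.ker_eq_bot_of_injective hψinj)
  have hindKN : LinearIndependent K f₀ := (LinearIndependent.iff_fractionRing O K).mp hindON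
  have hspN : ⊤ ≤ span K (range f₀) := by
    rw [← hNs, span_le]
    intro x hx
    have : x ∈ span O (range f₀) := hspanN ▸ hx
    exact Submodule.span_subset_span O K _ this
  have heq : n = o := by
    have := Fintype.card_congr (Module.Basis.indexEquiv (Module.Basis.mk hindKN hspN) e)
    simpa using this
  subst heq
  have hrel : ∀ i, f₀ i = a i • e₀ i := by
    intro i
    have h1 := hsnf i
    have : Fin.castLE hno i = i := Fin.ext rfl
    rw [this] at h1
    show (((bN i : ↥M₁) : V)) = a i • ((bO i : ↥M₁) : V)
    rw [h1]
    rfl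
  have hπ0 : (algebraMap O K) π ≠ 0 := fun h =>
    hπ.ne_zero (IsFractionRing.injective O K (by simpa using h))
  obtain ⟨m, ur, hreq⟩ := IsDiscreteValuationRing.eq_unit_mul_pow_irreducible hr hπ
  have hai : ∀ i, a i ≠ 0 := by
    intro i h
    exact hindKN.ne_zero i (by rw [hrel i, h, zero_smul])
  choose kk uu huu using fun i => IsDiscreteValuationRing.eq_unit_mul_pow_irreducible (hai i) hπ
  have hu0 : (algebraMap O K) (ur : O) ≠ 0 := fun h =>
    ur.ne_zero (IsFractionRing.injective O K (by simpa using h))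
  refine ⟨n, e, fun i => (kk i : ℤ) - (m : ℤ), ?_, ?_⟩
  · rw [he, Module.Basis.coe_mk, hspan₁]
  · have hM₂ : M₂ = ((algebraMap O K) r)⁻¹ • N := by
      rw [hN, smul_smul, inv_mul_cancel₀ hAr, one_smul]
    rw [hM₂, ← hspanN, Submodule.smul_span, Set.smul_set_range]
    have hgen : (fun i => ((algebraMap O K) r)⁻¹ • f₀ i)
        = fun i => ((uu i * ur⁻¹ : Oˣ) : O)
            • ((algebraMap O K π) ^ ((kk i : ℤ) - (m : ℤ)) • e i) := by
      funext i
      have h3 : (algebraMap O K) ((uu i * ur⁻¹ : Oˣ) : O) * (algebraMap O K) (ur : O)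
          = (algebraMap O K) ((uu i : Oˣ) : O) := by
        rw [← map_mul]
        congr 1
        rw [← Units.val_mul, inv_mul_cancel_right]
      have hei : e i = e₀ i := by rw [he, Module.Basis.mk_apply]
      rw [hrel i, hei, ← algebraMap_smul K ((uu i * ur⁻¹ : Oˣ) : O), ← algebraMap_smul K (a i),
        smul_smul, smul_smul]
      congr 1
      have h4 : (algebraMap O K) ((uu i * ur⁻¹ : Oˣ) : O)
          = (algebraMap O K) ((uu i : Oˣ) : O) * ((algebraMap O K) (ur : O))⁻¹ := by
        rw [← h3, mul_assoc, mul_inv_cancel₀ hu0, mul_one]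
      rw [huu i, hreq, map_mul, map_mul, map_pow, map_pow, zpow_sub₀ hπ0, zpow_natCast,
        zpow_natCast, h4, mul_inv, div_eq_mul_inv]
      ring
    rw [hgen]
    exact units_span_eq _ _

end AdaptedBasis

end AuxLemmas

open Set Submodule in
/-- compatibility of the filtration `F(·,·)` associated to a pair of lattices
with tensor products: under the canonical identification of `(M₁ ⊗ M₁')/π(M₁ ⊗ M₁')` with
`(M₁/πM₁) ⊗ (M₁'/πM₁')`, one has
`F^i(M₁ ⊗ M₁', M₂ ⊗ M₂') = ∑_{i₁+i₂=i} F^{i₁}(M₁,M₂) ⊗ F^{i₂}(M₁',M₂')`.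
Both sides are stated via their preimages in `M₁ ⊗ M₁'` (which contain `π·(M₁ ⊗ M₁')`). -/
theorem filtration_tensor_compat {O K V V' : Type*} [CommRing O] [IsDomain O]
    [IsDiscreteValuationRing O] [Field K] [Algebra O K] [IsFractionRing O K]
    [AddCommGroup V] [Module K V] [Module O V] [IsScalarTower O K V] [FiniteDimensional K V]
    [AddCommGroup V'] [Module K V'] [Module O V'] [IsScalarTower O K V'] [FiniteDimensional K V']
    (π : O) (hπ : Irreducible π)
    (M₁ M₂ : Submodule O V) (M₁' M₂' : Submodule O V')
    (h₁ : IsLatticeIn O K M₁) (h₂ : IsLatticeIn O K M₂)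
    (h₁' : IsLatticeIn O K M₁') (h₂' : IsLatticeIn O K M₂') (i : ℤ) :
    ((algebraMap O K π) ^ i • tensorLattice M₂ M₂') ⊓ tensorLattice M₁ M₁'
        ⊔ (algebraMap O K π) • tensorLattice M₁ M₁'
      = (⨆ j : ℤ, Submodule.span O (Set.image2 (fun x y => x ⊗ₜ[K] y)
            ((((algebraMap O K π) ^ j • M₂) ⊓ M₁ : Submodule O V) : Set V)
            ((((algebraMap O K π) ^ (i - j) • M₂') ⊓ M₁' : Submodule O V') : Set V')))
          ⊔ (algebraMap O K π) • tensorLattice M₁ M₁' := by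
  have hπ0 : π ≠ 0 := hπ.ne_zero
  obtain ⟨n, e, d, hM₁, hM₂⟩ := exists_adapted_basis hπ M₁ M₂ h₁.1 h₁.2 h₂.1 h₂.2
  obtain ⟨n', e', d', hM₁', hM₂'⟩ := exists_adapted_basis hπ M₁' M₂' h₁'.1 h₁'.2 h₂'.1 h₂'.2
  have hz : (fun a : Fin n => (algebraMap O K π) ^ (0 : ℤ) • e a) = ⇑e :=
    funext fun a => by rw [zpow_zero, one_smul]
  have hz' : (fun a : Fin n' => (algebraMap O K π) ^ (0 : ℤ) • e' a) = ⇑e' :=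
    funext fun a => by rw [zpow_zero, one_smul]
  have hM₁0 : M₁ = span O (range fun a => (algebraMap O K π) ^ (0 : ℤ) • e a) := by
    rw [hM₁, hz]
  have hM₁0' : M₁' = span O (range fun a => (algebraMap O K π) ^ (0 : ℤ) • e' a) := by
    rw [hM₁', hz']
  set E := e.tensorProduct e' with hE
  have hEp : ∀ p : Fin n × Fin n', e p.1 ⊗ₜ[K] e' p.2 = E p :=
    fun p => (Module.Basis.tensorProduct_apply' e e' p).symm
  -- rewrite the lattices in scaled-span form
  simp only [tensorLattice, hM₂, hM₂', hM₁0, hM₁0']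
  -- tensor products of scaled spans
  have s1 : span O (Set.image2 (fun x y => x ⊗ₜ[K] y)
        ((span O (range fun a => (algebraMap O K π) ^ (d a) • e a) : Submodule O V) : Set V)
        ((span O (range fun b => (algebraMap O K π) ^ (d' b) • e' b) : Submodule O V') : Set V'))
      = span O (range fun p : Fin n × Fin n' =>
          (algebraMap O K π) ^ (d p.1 + d' p.2) • E p) := by
    rw [scaled_span_tensor (K := K) hπ0 e e' d d']
    simp only [hEp]
  have s2 : span O (Set.image2 (fun x y => x ⊗ₜ[K] y)
        ((span O (range fun a => (algebraMap O K π) ^ (0 : ℤ) • e a) : Submodule O V) : Set V)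
        ((span O (range fun b => (algebraMap O K π) ^ (0 : ℤ) • e' b) : Submodule O V') : Set V'))
      = span O (range fun p : Fin n × Fin n' => (algebraMap O K π) ^ (0 : ℤ) • E p) := by
    have h := scaled_span_tensor (K := K) hπ0 ⇑e ⇑e' (fun _ : Fin n => (0 : ℤ)) (fun _ : Fin n' => (0 : ℤ))
    beta_reduce at h
    simp only [add_zero] at h
    rw [h]
    simp only [hEp]
  rw [s1, s2]
  -- left-hand side
  have s3 : (algebraMap O K π) ^ i
        • span O (range fun p : Fin n × Fin n' => (algebraMap O K π) ^ (d p.1 + d' p.2) • E p)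
      = span O (range fun p : Fin n × Fin n' =>
          (algebraMap O K π) ^ (i + (d p.1 + d' p.2)) • E p) :=
    scaled_span_smul (K := K) hπ0 ⇑E (fun p => d p.1 + d' p.2) i
  have s4 : span O (range fun p : Fin n × Fin n' =>
          (algebraMap O K π) ^ (i + (d p.1 + d' p.2)) • E p)
        ⊓ span O (range fun p : Fin n × Fin n' => (algebraMap O K π) ^ (0 : ℤ) • E p)
      = span O (range fun p : Fin n × Fin n' =>
          (algebraMap O K π) ^ (max (i + (d p.1 + d' p.2)) 0) • E p) :=
    scaled_span_inf (K := K) hπ0 E (fun p => i + (d p.1 + d' p.2)) (fun _ => 0)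
  have s6 : (algebraMap O K π)
        • span O (range fun p : Fin n × Fin n' => (algebraMap O K π) ^ (0 : ℤ) • E p)
      = span O (range fun p : Fin n × Fin n' => (algebraMap O K π) ^ (1 : ℤ) • E p) := by
    have := scaled_span_smul (K := K) hπ0 ⇑E (fun _ => (0 : ℤ)) 1
    rwa [zpow_one] at this
  have s7 : span O (range fun p : Fin n × Fin n' =>
          (algebraMap O K π) ^ (max (i + (d p.1 + d' p.2)) 0) • E p)
        ⊔ span O (range fun p : Fin n × Fin n' => (algebraMap O K π) ^ (1 : ℤ) • E p)
      = span O (range fun p : Fin n × Fin n' =>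
          (algebraMap O K π) ^ (min (max (i + (d p.1 + d' p.2)) 0) 1) • E p) :=
    scaled_span_sup (K := K) hπ0 ⇑E (fun p => max (i + (d p.1 + d' p.2)) 0) (fun _ => 1)
  rw [s3, s4, s6, s7]
  -- right-hand side
  have hj : ∀ j : ℤ, span O (Set.image2 (fun x y => x ⊗ₜ[K] y)
        (((((algebraMap O K π) ^ j
            • span O (range fun a => (algebraMap O K π) ^ (d a) • e a))
          ⊓ span O (range fun a => (algebraMap O K π) ^ (0 : ℤ) • e a)) : Submodule O V) : Set V)
        (((((algebraMap O K π) ^ (i - j)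
            • span O (range fun b => (algebraMap O K π) ^ (d' b) • e' b))
          ⊓ span O (range fun b => (algebraMap O K π) ^ (0 : ℤ) • e' b)) : Submodule O V') : Set V'))
      = span O (range fun p : Fin n × Fin n' =>
          (algebraMap O K π) ^ (max (j + d p.1) 0 + max (i - j + d' p.2) 0) • E p) := by
    intro j
    have t1 : (algebraMap O K π) ^ j
          • span O (range fun a => (algebraMap O K π) ^ (d a) • e a)
        = span O (range fun a => (algebraMap O K π) ^ (j + d a) • e a) :=
      scaled_span_smul (K := K) hπ0 ⇑e d j
    have t2 : span O (range fun a => (algebraMap O K π) ^ (j + d a) • e a)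
          ⊓ span O (range fun a => (algebraMap O K π) ^ (0 : ℤ) • e a)
        = span O (range fun a => (algebraMap O K π) ^ (max (j + d a) 0) • e a) :=
      scaled_span_inf (K := K) hπ0 e (fun a => j + d a) (fun _ => 0)
    have t1' : (algebraMap O K π) ^ (i - j)
          • span O (range fun b => (algebraMap O K π) ^ (d' b) • e' b)
        = span O (range fun b => (algebraMap O K π) ^ (i - j + d' b) • e' b) :=
      scaled_span_smul (K := K) hπ0 ⇑e' d' (i - j)
    have t2' : span O (range fun b => (algebraMap O K π) ^ (i - j + d' b) • e' b)
          ⊓ span O (range fun b => (algebraMap O K π) ^ (0 : ℤ) • e' b)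
        = span O (range fun b => (algebraMap O K π) ^ (max (i - j + d' b) 0) • e' b) :=
      scaled_span_inf (K := K) hπ0 e' (fun b => i - j + d' b) (fun _ => 0)
    have t3 : span O (Set.image2 (fun x y => x ⊗ₜ[K] y)
          ((span O (range fun a => (algebraMap O K π) ^ (max (j + d a) 0) • e a)
            : Submodule O V) : Set V)
          ((span O (range fun b => (algebraMap O K π) ^ (max (i - j + d' b) 0) • e' b)
            : Submodule O V') : Set V'))
        = span O (range fun p : Fin n × Fin n' =>
            (algebraMap O K π) ^ (max (j + d p.1) 0 + max (i - j + d' p.2) 0)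
              • (e p.1 ⊗ₜ[K] e' p.2)) :=
      scaled_span_tensor (K := K) hπ0 e e' (fun a => max (j + d a) 0) (fun b => max (i - j + d' b) 0)
    rw [t1, t2, t1', t2', t3]
    simp only [hEp]
  rw [iSup_congr hj]
  have s8 : (⨆ j : ℤ, span O (range fun p : Fin n × Fin n' =>
          (algebraMap O K π) ^ (max (j + d p.1) 0 + max (i - j + d' p.2) 0) • E p))
      = span O (range fun p : Fin n × Fin n' =>
          (algebraMap O K π) ^ (max (i + (d p.1 + d' p.2)) 0) • E p) :=
    scaled_span_iSup (K := K) hπ0 ⇑E (fun j p => max (j + d p.1) 0 + max (i - j + d' p.2) 0)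
      (fun p => max (i + (d p.1 + d' p.2)) 0)
      (fun j p => by beta_reduce; omega) (fun p => ⟨-d p.1, by beta_reduce; omega⟩)
  rw [s8, s7]
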